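/- Assume F has no ties, so that Pr(T = X_{k:n}) = φ^q_{n−k+1} − φ^q_{n−k} where φ^q_k = ∑_{|x|=k} q(x) φ(x). Then the equalities Pr(T = X_{k:n}) = φ_{n−k+1} − φ_{n−k} (with φ_k = C(n,k)^{-1} ∑_{|x|=k} φ(x)) hold for all k ∈ [n] and every nondecreasing φ : {0,1}^n → {0,1} with φ(0)=0, φ(1)=1, if and only if q(x) = 1/C(n,|x|) for every x ∈ {0,1}^n with x ≠ 0 and x ≠ 1 (i.e., q is symmetric). -/

import Mathlib

private lemma bool_le_imp {a b : Bool} (h : a ≤ b) (ha : a = true) : b = true := by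
  subst ha
  cases b
  · exact absurd h (by decide)
  · rfl

private lemma card_eq_zero_iff' {n : ℕ} (x : Fin n → Bool) :
    (Finset.univ.filter fun i => x i = true).card = 0 ↔ x = fun _ => false := by
  rw [Finset.card_eq_zero, Finset.filter_eq_empty_iff]
  constructor
  · intro h; funext i
    have := h (Finset.mem_univ i); simpa using this
  · intro h i _; simp [h]

private lemma card_eq_n_iff' {n : ℕ} (x : Fin n → Bool) :
    (Finset.univ.filter fun i => x i = true).card = n ↔ x = fun _ => true := by
  constructor
  · intro h
    have huniv : (Finset.univ.filter fun i => x i = true) = Finset.univ :=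
      Finset.eq_univ_of_card _ (by simpa using h)
    funext i
    have hmem : i ∈ Finset.univ.filter fun j => x j = true := by
      rw [huniv]; exact Finset.mem_univ i
    exact (Finset.mem_filter.mp hmem).2
  · intro h; simp [h]

private lemma wmono {n : ℕ} {x y : Fin n → Bool} (h : ∀ i, x i ≤ y i) :
    (Finset.univ.filter fun i => x i = true) ⊆ (Finset.univ.filter fun i => y i = true) := by
  intro i hi
  simp only [Finset.mem_filter, Finset.mem_univ, true_and] at *
  exact bool_le_imp (h i) hi

private lemma eq_of_le_of_card_le {n : ℕ} {x y : Fin n → Bool} (h : ∀ i, x i ≤ y i)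
    (hc : (Finset.univ.filter fun i => y i = true).card ≤
      (Finset.univ.filter fun i => x i = true).card) : x = y := by
  have heq := Finset.eq_of_subset_of_card_le (wmono h) hc
  funext i
  have : (x i = true) ↔ (y i = true) := by
    constructor
    · intro hx; exact bool_le_imp (h i) hx
    · intro hy
      have : i ∈ Finset.univ.filter fun j => x j = true := by
        rw [heq]; simp [hy]
      simpa using this
  cases hx : x i <;> cases hy : y i <;> simp_all

private lemma chain (n : ℕ) (A B : ℕ → ℝ) (hA0 : A 0 = B 0)
    (h : ∀ j, 1 ≤ j → j ≤ n → A j - A (j - 1) = B j - B (j - 1)) :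
    ∀ j, j ≤ n → A j = B j := by
  intro j
  induction j with
  | zero => intro _; exact hA0
  | succ i ih =>
    intro hj
    have h1 := h (i + 1) (by omega) hj
    have h2 := ih (by omega)
    simp only [Nat.add_sub_cancel] at h1
    linarith




open MeasureTheory
open scoped ProbabilityTheory

/-- Assume no ties, and take as given the formula `Pr(T = X_{k:n}) = φ^q_{n-k+1} - φ^q_{n-k}`
with `φ^q_j = ∑_{|x|=j} q(x) φ(x)` and `q` the relative quality function (identified with a
function on `{0,1}^n`). Then `Pr(T = X_{k:n}) = φ_{n-k+1} - φ_{n-k}` (with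
`φ_j = C(n,j)⁻¹ ∑_{|x|=j} φ(x)`) holds for all `k ∈ [n]` and every semicoherent structure
function `φ` iff `q(x) = 1 / C(n,|x|)` for every `x ∉ {0, 1}`, i.e. `q` is symmetric. -/
theorem stmt_14 (n : ℕ) (hn : 2 ≤ n)
    {Ω : Type*} [MeasureSpace Ω] [IsProbabilityMeasure (ℙ : Measure Ω)]
    (X : Fin n → Ω → ℝ) (hX : ∀ i, Measurable (X i))
    (hnoties : ∀ i j : Fin n, i ≠ j → ℙ {ω | X i ω = X j ω} = 0)
    (q : (Fin n → Bool) → ℝ)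
    (hq : ∀ x, q x =
      (ℙ {ω | ∀ i, x i = false → ∀ j, x j = true → X i ω < X j ω}).toReal)
    (PT : ((Fin n → Bool) → Bool) → ℕ → ℝ)
    (hPT : ∀ φ : (Fin n → Bool) → Bool,
      (∀ x y : Fin n → Bool, (∀ i, x i ≤ y i) → φ x ≤ φ y) →
      φ (fun _ => false) = false → φ (fun _ => true) = true →
      ∀ k ∈ Finset.Icc 1 n,
        PT φ k =
          (∑ x ∈ Finset.univ.filter
              (fun x : Fin n → Bool =>
                (Finset.univ.filter fun i => x i = true).card = n - k + 1),
            q x * (if φ x then (1 : ℝ) else 0)) -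
          (∑ x ∈ Finset.univ.filter
              (fun x : Fin n → Bool =>
                (Finset.univ.filter fun i => x i = true).card = n - k),
            q x * (if φ x then (1 : ℝ) else 0))) :
    (∀ φ : (Fin n → Bool) → Bool,
      (∀ x y : Fin n → Bool, (∀ i, x i ≤ y i) → φ x ≤ φ y) →
      φ (fun _ => false) = false → φ (fun _ => true) = true →
      ∀ k ∈ Finset.Icc 1 n,
        PT φ k =
          ((n.choose (n - k + 1) : ℝ))⁻¹ *
            (∑ x ∈ Finset.univ.filter
                (fun x : Fin n → Bool =>
                  (Finset.univ.filter fun i => x i = true).card = n - k + 1),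
              (if φ x then (1 : ℝ) else 0)) -
          ((n.choose (n - k) : ℝ))⁻¹ *
            (∑ x ∈ Finset.univ.filter
                (fun x : Fin n → Bool =>
                  (Finset.univ.filter fun i => x i = true).card = n - k),
              (if φ x then (1 : ℝ) else 0))) ↔
    (∀ x : Fin n → Bool, x ≠ (fun _ => false) → x ≠ (fun _ => true) →
      q x = 1 / (n.choose ((Finset.univ.filter fun i => x i = true).card) : ℝ)) := by
  classical
  constructor
  · -- forward direction
    intro H x hx0 hx1
    set m := (Finset.univ.filter fun i => x i = true).card with hm
    have hmn' : m ≤ n := by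
      rw [hm]
      simpa using Finset.card_le_card
        (Finset.filter_subset (fun i => x i = true) (Finset.univ : Finset (Fin n)))
    have hm0 : m ≠ 0 := by
      intro h
      exact hx0 ((card_eq_zero_iff' x).mp (by rw [← hm]; exact h))
    have hmn : m ≠ n := by
      intro h
      exact hx1 ((card_eq_n_iff' x).mp (by rw [← hm]; exact h))
    set φ : (Fin n → Bool) → Bool :=
      fun y => decide ((m < (Finset.univ.filter fun i => y i = true).card) ∨ y = x) with hφ
    have himp : ∀ y y' : Fin n → Bool, (∀ i, y i ≤ y' i) → φ y = true → φ y' = true := by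
      intro y y' hle hy
      simp only [hφ, decide_eq_true_iff] at hy ⊢
      have hcar : (Finset.univ.filter fun i => y i = true).card ≤
          (Finset.univ.filter fun i => y' i = true).card :=
        Finset.card_le_card (wmono hle)
      rcases hy with h1 | h2
      · exact Or.inl (lt_of_lt_of_le h1 hcar)
      · subst h2
        by_cases hlt : m < (Finset.univ.filter fun i => y' i = true).card
        · exact Or.inl hlt
        · push_neg at hlt
          right
          exact (eq_of_le_of_card_le hle (by rw [← hm]; exact hlt)).symm
    have hmonoφ : ∀ y y' : Fin n → Bool, (∀ i, y i ≤ y' i) → φ y ≤ φ y' := by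
      intro y y' hle
      cases hyy : φ y with
      | false => exact Bool.false_le _
      | true => rw [himp y y' hle hyy]
    have h0f : φ (fun _ => false) = false := by
      simp only [hφ]
      rw [decide_eq_false_iff_not]
      rintro (h1 | h2)
      · simp at h1
      · exact hx0 h2.symm
    have h1f : φ (fun _ => true) = true := by
      simp only [hφ]
      rw [decide_eq_true_iff]
      left
      have hcn : (Finset.filter (fun _ : Fin n => True) Finset.univ).card = n := by simp
      omega
    have key : ∀ j, j ≤ n →
        (∑ y ∈ Finset.univ.filter
            (fun y : Fin n → Bool => (Finset.univ.filter fun i => y i = true).card = j),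
          q y * (if φ y then (1 : ℝ) else 0)) =
        ((n.choose j : ℝ))⁻¹ *
          (∑ y ∈ Finset.univ.filter
              (fun y : Fin n → Bool => (Finset.univ.filter fun i => y i = true).card = j),
            (if φ y then (1 : ℝ) else 0)) := by
      apply chain n
      · -- j = 0 case
        have hz : ∀ y ∈ Finset.univ.filter
            (fun y : Fin n → Bool => (Finset.univ.filter fun i => y i = true).card = 0),
            (if φ y then (1 : ℝ) else 0) = 0 := by
          intro y hy
          have hy0 : y = fun _ => false :=
            (card_eq_zero_iff' y).mp (Finset.mem_filter.mp hy).2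
          rw [hy0, h0f]
          simp
        rw [Finset.sum_eq_zero (fun y hy => by rw [hz y hy, mul_zero]),
          Finset.sum_eq_zero hz, mul_zero]
      · intro j h1j hjn
        have hkmem : n + 1 - j ∈ Finset.Icc 1 n := by rw [Finset.mem_Icc]; omega
        have e1 := hPT φ hmonoφ h0f h1f (n + 1 - j) hkmem
        have e2 := H φ hmonoφ h0f h1f (n + 1 - j) hkmem
        have hj1 : n - (n + 1 - j) + 1 = j := by omega
        have hj2 : n - (n + 1 - j) = j - 1 := by omega
        rw [hj1, hj2] at e1 e2
        rw [e1] at e2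
        linarith
    have hxmem : x ∈ Finset.univ.filter
        (fun y : Fin n → Bool => (Finset.univ.filter fun i => y i = true).card = m) := by
      rw [Finset.mem_filter]
      exact ⟨Finset.mem_univ x, hm.symm⟩
    have hkm := key m hmn'
    rw [Finset.sum_eq_single_of_mem x hxmem (by
        intro y hy hyx
        have hyc : (Finset.univ.filter fun i => y i = true).card = m :=
          (Finset.mem_filter.mp hy).2
        have : φ y = false := by
          simp only [hφ, decide_eq_false_iff_not]
          rintro (h1 | h2)
          · rw [hyc] at h1; exact lt_irrefl m h1
          · exact hyx h2
        rw [this]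
        simp),
      Finset.sum_eq_single_of_mem x hxmem (by
        intro y hy hyx
        have hyc : (Finset.univ.filter fun i => y i = true).card = m :=
          (Finset.mem_filter.mp hy).2
        have : φ y = false := by
          simp only [hφ, decide_eq_false_iff_not]
          rintro (h1 | h2)
          · rw [hyc] at h1; exact lt_irrefl m h1
          · exact hyx h2
        rw [this]
        simp)] at hkm
    have hφx : φ x = true := by
      simp only [hφ, decide_eq_true_iff]
      exact Or.inr (by trivial)
    rw [hφx] at hkm
    simp only [if_true, mul_one] at hkm
    rw [hkm, one_div]
  · -- backward direction
    intro hsym φ hmono h0f h1f k hk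
    rw [hPT φ hmono h0f h1f k hk]
    have hq1 : q (fun _ => true) = 1 := by
      rw [hq]
      have hs : {ω | ∀ (i : Fin n), ((fun _ => true) : Fin n → Bool) i = false →
          ∀ (j : Fin n), ((fun _ => true) : Fin n → Bool) j = true → X i ω < X j ω}
          = (Set.univ : Set Ω) := by
        ext ω; simp
      rw [hs, measure_univ, ENNReal.toReal_one]
    have claim : ∀ j : ℕ,
        (∑ x ∈ Finset.univ.filter
            (fun y : Fin n → Bool => (Finset.univ.filter fun i => y i = true).card = j),
          q x * (if φ x then (1 : ℝ) else 0)) =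
        ((n.choose j : ℝ))⁻¹ *
          (∑ x ∈ Finset.univ.filter
              (fun y : Fin n → Bool => (Finset.univ.filter fun i => y i = true).card = j),
            (if φ x then (1 : ℝ) else 0)) := by
      intro j
      rw [Finset.mul_sum]
      apply Finset.sum_congr rfl
      intro x hx
      have hxj : (Finset.univ.filter fun i => x i = true).card = j :=
        (Finset.mem_filter.mp hx).2
      by_cases hφx : φ x = true
      · by_cases hx1 : x = fun _ => true
        · have hjn : j = n := by
            rw [← hxj]
            exact (card_eq_n_iff' x).mpr hx1
          rw [hx1, hq1, hjn, Nat.choose_self]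
          norm_num
        · by_cases hx0 : x = fun _ => false
          · exfalso
            rw [hx0, h0f] at hφx
            simp at hφx
          · rw [hsym x hx0 hx1, hxj, one_div]
      · have hf : φ x = false := by
          rw [← Bool.not_eq_true]
          exact hφx
        rw [hf]
        simp
    rw [claim, claim]
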